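/- Let s ≥ 1 be an integer, P a polynomial, Q(z) = 1 - a·z with a ∈ ℝ, and ψ = P/Q^s. Then for every k ∈ ℕ, wherever Q does not vanish, ψ^{(k)} = ((-Q')^k · k! / Q^{s+k}) · Σ_{m=0}^{min(k,s)} (1/m!) · binom(s-1+k-m, s-1) · (-Q/Q')^m · P^{(m)}, provided a ≠ 0 (so Q' = -a ≠ 0). -/

import Mathlib

open Polynomial

open Finset in
lemma choose_id {n r : ℕ} (h : r ≤ n) :
    (n : ℝ) * ((n - 1).choose r : ℝ) = ((n : ℝ) - r) * (n.choose r : ℝ) := by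
  rcases n with _ | t
  · interval_cases r; simp
  · have h' : r ≤ t + 1 := h
    have hn : (t + 1) * Nat.choose t r = Nat.choose (t+1) r * (t + 1 - r) := by
      rw [Nat.add_one_mul_choose_eq, Nat.choose_succ_right_eq]
    have := congrArg (Nat.cast (R := ℝ)) hn
    push_cast [Nat.cast_sub h'] at this
    simpa using by linarith [this]

noncomputable def cf (s k m : ℕ) : ℝ :=
  ((s - 1 + k - m).choose (s - 1) : ℝ) / m.factorial

lemma cf_step {s : ℕ} (hs : 1 ≤ s) (k m : ℕ) (hm : m ≤ k) :
    ((s:ℝ) + k - m - 1) * cf s k (m+1) + cf s k m = ((k:ℝ)+1) * cf s (k+1) (m+1) := by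
  have hn2 : s - 1 + (k+1) - (m+1) = s - 1 + k - m := by omega
  have hn3 : s - 1 + k - (m+1) = (s - 1 + k - m) - 1 := by omega
  set n := s - 1 + k - m with hn
  have hn1 : n + m + 1 = s + k := by omega
  have hr : s - 1 ≤ n := by omega
  have hcast : (n : ℝ) = s + k - m - 1 := by
    have := congrArg (Nat.cast (R := ℝ)) hn1; push_cast at this; linarith
  have hsr : ((s - 1 : ℕ) : ℝ) = (s : ℝ) - 1 := by push_cast [Nat.cast_sub hs]; ring
  have key : ((s:ℝ) + k - m - 1) * ((n-1).choose (s-1) : ℝ) = ((k:ℝ) - m) * (n.choose (s-1) : ℝ) := by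
    rw [← hcast, choose_id hr, hsr, hcast]; ring
  simp only [cf, hn2, hn3, ← hn]
  rw [Nat.factorial_succ]
  have hf : (m.factorial : ℝ) ≠ 0 := Nat.cast_ne_zero.mpr m.factorial_ne_zero
  field_simp
  push_cast; linear_combination key * (m.factorial : ℝ)

lemma cf_zero {s : ℕ} (hs : 1 ≤ s) (k : ℕ) :
    ((s:ℝ) + k) * cf s k 0 = ((k:ℝ)+1) * cf s (k+1) 0 := by
  have hn1 : s - 1 + k - 0 = (s + k) - 1 := by omega
  have hn2 : s - 1 + (k+1) - 0 = s + k := by omega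
  have hr : s - 1 ≤ s + k := by omega
  have hid := choose_id (n := s + k) hr
  have hsr : ((s - 1 : ℕ) : ℝ) = (s : ℝ) - 1 := by push_cast [Nat.cast_sub hs]; ring
  simp only [cf, hn1, hn2, Nat.factorial_zero, Nat.cast_one, div_one]
  push_cast at hid ⊢
  rw [hid, hsr]; ring

open Finset in
lemma sum_id (s : ℕ) (hs : 1 ≤ s) (k : ℕ) (u : ℝ) (p : ℕ → ℝ) :
    (∑ m ∈ range (k+1), ((s:ℝ) + k - m) * cf s k m * u^m * p m)
      + ∑ m ∈ range (k+1), cf s k m * u^(m+1) * p (m+1)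
    = ((k:ℝ)+1) * ∑ m ∈ range (k+2), cf s (k+1) m * u^m * p m := by
  rw [Finset.mul_sum,
    Finset.sum_range_succ' (fun m => ((k:ℝ)+1) * (cf s (k+1) m * u^m * p m)) (k+1),
    Finset.sum_range_succ' (fun m => ((s:ℝ) + k - m) * cf s k m * u^m * p m) k]
  push_cast
  have hext : ∑ m ∈ range k, ((s:ℝ) + k - (m+1)) * cf s k (m+1) * u^(m+1) * p (m+1)
      = ∑ m ∈ range (k+1), ((s:ℝ) + k - (m+1)) * cf s k (m+1) * u^(m+1) * p (m+1) := by
    rw [Finset.sum_range_succ]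
    have h0 : ((s:ℝ) + k - ((k:ℝ)+1)) * cf s k (k+1) = 0 := by
      rcases Nat.lt_or_ge s 2 with h2 | h2
      · have hs1 : s = 1 := by omega
        subst hs1; push_cast; ring_nf
      · have hz : s - 1 + k - (k+1) < s - 1 := by omega
        simp [cf, Nat.choose_eq_zero_of_lt hz]
    rw [h0, zero_mul, zero_mul, add_zero]
  rw [hext]
  have hterm : ∀ m ∈ range (k+1),
      ((s:ℝ) + k - ((m:ℝ)+1)) * cf s k (m+1) * u^(m+1) * p (m+1)
        + cf s k m * u^(m+1) * p (m+1)
      = ((k:ℝ)+1) * (cf s (k+1) (m+1) * u^(m+1) * p (m+1)) := by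
    intro m hm
    rw [Finset.mem_range] at hm
    have := cf_step hs k m (by omega)
    linear_combination this * (u^(m+1) * p (m+1))
  rw [add_right_comm, ← Finset.sum_add_distrib, Finset.sum_congr rfl hterm]
  have := cf_zero hs k
  push_cast
  linear_combination p 0 * this

lemma aux (s : ℕ) (hs : 1 ≤ s) (a : ℝ) (ha : a ≠ 0)
    (P : Polynomial ℝ) (hdeg : P.natDegree ≤ s) :
    ∀ k x, 1 - a * x ≠ 0 →
    iteratedDeriv k (fun z => P.eval z / (1 - a * z) ^ s) x =
      a ^ k * (k.factorial : ℝ) / (1 - a * x) ^ (s + k) *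
        ∑ m ∈ Finset.range (k + 1),
          cf s k m * ((1 - a * x) / a) ^ m * (Polynomial.derivative^[m] P).eval x := by
  intro k
  induction k with
  | zero =>
    intro x hx
    simp [cf, Nat.choose_self]
    ring
  | succ k ih =>
    intro x hx
    have hcont : Continuous fun z : ℝ => 1 - a * z := by continuity
    have hU : ∀ᶠ z in nhds x, 1 - a * z ≠ 0 := hcont.continuousAt.eventually_ne hx
    have hev : iteratedDeriv k (fun z => P.eval z / (1 - a * z) ^ s)
        =ᶠ[nhds x] fun z => a ^ k * (k.factorial : ℝ) / (1 - a * z) ^ (s + k) *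
          ∑ m ∈ Finset.range (k + 1),
            cf s k m * ((1 - a * z) / a) ^ m * (Polynomial.derivative^[m] P).eval z :=
      hU.mono (fun z hz => ih z hz)
    rw [iteratedDeriv_succ, hev.deriv_eq]
    -- derivative setup
    have hq : HasDerivAt (fun z : ℝ => 1 - a * z) (-a) x := by
      simpa using ((hasDerivAt_id x).const_mul a).const_sub 1
    have hS : HasDerivAt
        (fun z => ∑ m ∈ Finset.range (k + 1),
          cf s k m * ((1 - a * z) / a) ^ m * (Polynomial.derivative^[m] P).eval z)
        (∑ m ∈ Finset.range (k + 1),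
          (cf s k m * (((m:ℝ) * ((1 - a * x) / a) ^ (m-1) * (-a / a)) * (Polynomial.derivative^[m] P).eval x
            + ((1 - a * x) / a) ^ m * (Polynomial.derivative^[m+1] P).eval x))) x := by
      apply HasDerivAt.fun_sum
      intro m _
      have h1 : HasDerivAt (fun z : ℝ => ((1 - a * z) / a) ^ m)
          ((m:ℝ) * ((1 - a * x) / a) ^ (m-1) * (-a / a)) x := by
        simpa using (hq.div_const a).fun_pow m
      have h2 : HasDerivAt (fun z => (Polynomial.derivative^[m] P).eval z)
          ((Polynomial.derivative^[m+1] P).eval x) x := by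
        simpa [Function.iterate_succ_apply'] using (Polynomial.derivative^[m] P).hasDerivAt x
      simpa [mul_assoc] using (h1.mul h2).const_mul (cf s k m)
    have hpow : HasDerivAt (fun z : ℝ => (1 - a * z) ^ (s + k))
        (((s+k : ℕ) : ℝ) * (1 - a * x) ^ (s + k - 1) * (-a)) x := hq.pow (s + k)
    have hinv : HasDerivAt (fun z : ℝ => ((1 - a * z) ^ (s + k))⁻¹)
        (-(((s+k : ℕ) : ℝ) * (1 - a * x) ^ (s + k - 1) * (-a)) / ((1 - a * x) ^ (s + k)) ^ 2) x :=
      hpow.inv (pow_ne_zero _ hx)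
    have hg : HasDerivAt
        (fun z => a ^ k * (k.factorial : ℝ) / (1 - a * z) ^ (s + k) *
          ∑ m ∈ Finset.range (k + 1),
            cf s k m * ((1 - a * z) / a) ^ m * (Polynomial.derivative^[m] P).eval z)
        ((a ^ k * (k.factorial : ℝ) * (-(((s+k : ℕ) : ℝ) * (1 - a * x) ^ (s + k - 1) * (-a)) / ((1 - a * x) ^ (s + k)) ^ 2)) *
          (∑ m ∈ Finset.range (k + 1),
            cf s k m * ((1 - a * x) / a) ^ m * (Polynomial.derivative^[m] P).eval x)
          + (a ^ k * (k.factorial : ℝ) / (1 - a * x) ^ (s + k)) *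
          (∑ m ∈ Finset.range (k + 1),
            (cf s k m * (((m:ℝ) * ((1 - a * x) / a) ^ (m-1) * (-a / a)) * (Polynomial.derivative^[m] P).eval x
              + ((1 - a * x) / a) ^ m * (Polynomial.derivative^[m+1] P).eval x)))) x := by
      simpa only [div_eq_mul_inv, mul_assoc] using (hinv.const_mul (a ^ k * (k.factorial : ℝ))).fun_mul hS
    rw [hg.deriv]
    set p : ℕ → ℝ := fun m => (Polynomial.derivative^[m] P).eval x with hp
    have hterm : ∀ m ∈ Finset.range (k+1),
        a * ((s:ℝ)+k) * (cf s k m * ((1-a*x)/a)^m * p m)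
          + (1-a*x) * (cf s k m * (((m:ℝ)*((1-a*x)/a)^(m-1)*(-a/a)) * p m + ((1-a*x)/a)^m * p (m+1)))
        = a * (((s:ℝ)+k-m) * cf s k m * ((1-a*x)/a)^m * p m
            + cf s k m * ((1-a*x)/a)^(m+1) * p (m+1)) := by
      intro m _
      rcases m with _ | m
      · push_cast; field_simp; ring
      · push_cast; simp only [Nat.add_sub_cancel, pow_succ]
        field_simp
        ring
    have key : a * ((s:ℝ)+k) * (∑ m ∈ Finset.range (k+1),
          cf s k m * ((1-a*x)/a)^m * p m)
        + (1-a*x) * (∑ m ∈ Finset.range (k+1),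
            (cf s k m * (((m:ℝ)*((1-a*x)/a)^(m-1)*(-a/a)) * p m + ((1-a*x)/a)^m * p (m+1))))
        = a * (((k:ℝ)+1) * ∑ m ∈ Finset.range (k+2),
            cf s (k+1) m * ((1-a*x)/a)^m * p m) := by
      rw [Finset.mul_sum, Finset.mul_sum, ← Finset.sum_add_distrib,
        Finset.sum_congr rfl hterm, ← Finset.mul_sum]
      rw [Finset.sum_add_distrib, sum_id s hs k ((1-a*x)/a) p]
    set S := ∑ m ∈ Finset.range (k+1), cf s k m * ((1-a*x)/a)^m * p m with hS1
    set S2 := ∑ m ∈ Finset.range (k+1),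
        (cf s k m * (((m:ℝ)*((1-a*x)/a)^(m-1)*(-a/a)) * p m + ((1-a*x)/a)^m * p (m+1))) with hS2
    set T := ∑ m ∈ Finset.range (k+2), cf s (k+1) m * ((1-a*x)/a)^m * p m with hT
    obtain ⟨e, he⟩ : ∃ e, s + k = e + 1 := ⟨s+k-1, by omega⟩
    have hcast : ((e:ℝ)+1) = (s:ℝ)+(k:ℝ) := by
      have := congrArg (Nat.cast (R := ℝ)) he; push_cast at this; linarith
    rw [show s + (k+1) = (e+1)+1 from by omega, he]
    simp only [Nat.add_sub_cancel, Nat.factorial_succ]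
    push_cast
    rw [← hcast] at key
    field_simp
    simp only [pow_succ]
    linear_combination (a^k * (1-a*x)^e * (1-a*x)^e * (1-a*x)^2) * key


/-- Explicit formula for the `k`-th derivative of `ψ = P / Q^s` where
`Q(z) = 1 - a z` with `a ≠ 0` (so `Q' ≡ -a`): wherever `Q` does not vanish,
`ψ^{(k)} = ((-Q')^k k! / Q^{s+k}) ∑_{m=0}^{min(k,s)} (1/m!) C(s-1+k-m, s-1)
(-Q/Q')^m P^{(m)}`. -/
theorem deriv_formula_psi (s : ℕ) (hs : 1 ≤ s) (a : ℝ) (ha : a ≠ 0)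
    (P : Polynomial ℝ) (hdeg : P.natDegree ≤ s) (k : ℕ) (x : ℝ)
    (hx : 1 - a * x ≠ 0) :
    iteratedDeriv k (fun z => P.eval z / (1 - a * z) ^ s) x =
      ((-(-a)) ^ k * (k.factorial : ℝ) / (1 - a * x) ^ (s + k)) *
        ∑ m ∈ Finset.range (min k s + 1),
          (1 / (m.factorial : ℝ)) * ((s - 1 + k - m).choose (s - 1) : ℝ) *
            (-(1 - a * x) / (-a)) ^ m *
            (Polynomial.derivative^[m] P).eval x := by
  rw [aux s hs a ha P hdeg k x hx]
  simp only [neg_neg, neg_div_neg_eq]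
  congr 1
  have hsub : Finset.range (min k s + 1) ⊆ Finset.range (k+1) := by
    intro m hm; simp only [Finset.mem_range] at *; omega
  have hz : ∀ m ∈ Finset.range (k+1), m ∉ Finset.range (min k s + 1) →
      (1 / (m.factorial : ℝ)) * ((s - 1 + k - m).choose (s - 1) : ℝ) *
        ((1 - a * x) / a) ^ m * (Polynomial.derivative^[m] P).eval x = 0 := by
    intro m h1 h2
    simp only [Finset.mem_range] at h1 h2
    have hm : P.natDegree < m := by omega
    rw [Polynomial.iterate_derivative_eq_zero hm]
    simp
  rw [Finset.sum_subset hsub hz]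
  refine Finset.sum_congr rfl fun m _ => ?_
  simp only [cf]
  ring
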